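/- Let q = p^n, p ≡ 3 (mod 4), n odd, and E ⊆ F_q^2. Define ν_T(t) for t = (t₁,t₂,t₃) ∈ F_q³ as the number of triples (x,y,z) ∈ E³ with ||x−y|| = t₁, ||x−z|| = t₂, ||y−z|| = t₃. Then Σ_{t ∈ F_q³} ν_T(t)² ≤ C Σ_{θ ∈ O_2(F_q)} Σ_{w ∈ F_q^2} λ_θ(w)³, where λ_θ(w) = |{(u,v) ∈ E² : u − θv = w}|. -/

import Mathlib

def lamCount {F : Type} [Field F] [Fintype F] [DecidableEq F]
    (E : Finset (Fin 2 → F)) (θ : Matrix (Fin 2) (Fin 2) F) (w : Fin 2 → F) : ℕ :=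
  ((E ×ˢ E).filter (fun uv => uv.1 - θ.mulVec uv.2 = w)).card

def nuT {F : Type} [Field F] [Fintype F] [DecidableEq F]
    (E : Finset (Fin 2 → F)) (t : Fin 3 → F) : ℕ :=
  ((E ×ˢ E ×ˢ E).filter (fun xyz =>
    (∑ i, (xyz.1 i - xyz.2.1 i) ^ 2) = t 0 ∧
    (∑ i, (xyz.1 i - xyz.2.2 i) ^ 2) = t 1 ∧
    (∑ i, (xyz.2.1 i - xyz.2.2 i) ^ 2) = t 2)).card

lemma aniso {F : Type} [Field F] (hsq : ¬ IsSquare (-1:F)) {a b : F}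
    (h : a^2 + b^2 = 0) : a = 0 ∧ b = 0 := by
  by_cases hb : b = 0
  · refine ⟨?_, hb⟩
    have ha : a^2 = 0 := by rw [hb] at h; simpa using h
    exact pow_eq_zero_iff (by norm_num) |>.mp ha
  · exact absurd ⟨a/b, by field_simp; linear_combination -h⟩ hsq

lemma mv {F : Type} [Field F] (θ : Matrix (Fin 2) (Fin 2) F) (v : Fin 2 → F) (i : Fin 2) :
    θ.mulVec v i = θ i 0 * v 0 + θ i 1 * v 1 := by
  simp [Matrix.mulVec, dotProduct, Fin.sum_univ_two]

lemma orth_e {F : Type} [Field F] {θ : Matrix (Fin 2) (Fin 2) F} (h : θ.transpose * θ = 1) :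
    θ 0 0 * θ 0 0 + θ 1 0 * θ 1 0 = 1 ∧ θ 0 1 * θ 0 1 + θ 1 1 * θ 1 1 = 1 ∧
    θ 0 0 * θ 0 1 + θ 1 0 * θ 1 1 = 0 := by
  have h00 := congrFun (congrFun h 0) 0
  have h11 := congrFun (congrFun h 1) 1
  have h01 := congrFun (congrFun h 0) 1
  simp [Matrix.mul_apply, Fin.sum_univ_two, Matrix.transpose_apply, Matrix.one_apply] at h00 h11 h01
  exact ⟨h00, h11, h01⟩

lemma orth_ip {F : Type} [Field F] {θ : Matrix (Fin 2) (Fin 2) F} (h : θ.transpose * θ = 1)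
    (u v : Fin 2 → F) :
    θ.mulVec u 0 * θ.mulVec v 0 + θ.mulVec u 1 * θ.mulVec v 1 = u 0 * v 0 + u 1 * v 1 := by
  obtain ⟨e1, e2, e3⟩ := orth_e h
  rw [mv, mv, mv, mv]
  linear_combination (u 0 * v 0) * e1 + (u 1 * v 1) * e2 + (u 0 * v 1 + u 1 * v 0) * e3

lemma rot_orth {F : Type} [Field F] {s t : F} (h : s^2+t^2=1) :
    (!![s,-t;t,s]).transpose * !![s,-t;t,s] = 1 := by
  rw [Matrix.eta_fin_two (!![s,-t;t,s]).transpose]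
  simp only [Matrix.transpose_apply]
  rw [Matrix.mul_fin_two, Matrix.one_fin_two]
  ext i j; fin_cases i <;> fin_cases j <;> simp <;>
    first | linear_combination h | ring1

lemma rot_exists {F : Type} [Field F] (hsq : ¬ IsSquare (-1:F)) {v v' : Fin 2 → F}
    (hne : ¬(v' 0 = 0 ∧ v' 1 = 0))
    (hn : v 0^2 + v 1^2 = v' 0^2 + v' 1^2) :
    ∃ θ : Matrix (Fin 2) (Fin 2) F, θ.transpose * θ = 1 ∧ θ.mulVec v' = v := by
  have hr : v' 0^2 + v' 1^2 ≠ 0 := fun h => hne (aniso hsq h)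
  refine ⟨!![(v 0*v' 0+v 1*v' 1)/(v' 0^2+v' 1^2), -((v' 0*v 1 - v 0*v' 1)/(v' 0^2+v' 1^2));
            (v' 0*v 1 - v 0*v' 1)/(v' 0^2+v' 1^2), (v 0*v' 0+v 1*v' 1)/(v' 0^2+v' 1^2)], ?_, ?_⟩
  · apply rot_orth
    field_simp
    linear_combination (v' 0^2 + v' 1^2) * hn
  · funext i
    fin_cases i <;> rw [mv] <;> simp <;> field_simp <;> ring

lemma refl_orth {F : Type} [Field F] {Y : Fin 2 → F} (hr : Y 0^2 + Y 1^2 ≠ 0) :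
    (!![(Y 0^2 - Y 1^2)/(Y 0^2+Y 1^2), 2*Y 0*Y 1/(Y 0^2+Y 1^2);
       2*Y 0*Y 1/(Y 0^2+Y 1^2), (Y 1^2 - Y 0^2)/(Y 0^2+Y 1^2)]).transpose *
    !![(Y 0^2 - Y 1^2)/(Y 0^2+Y 1^2), 2*Y 0*Y 1/(Y 0^2+Y 1^2);
       2*Y 0*Y 1/(Y 0^2+Y 1^2), (Y 1^2 - Y 0^2)/(Y 0^2+Y 1^2)] = 1 := by
  set M := !![(Y 0^2 - Y 1^2)/(Y 0^2+Y 1^2), 2*Y 0*Y 1/(Y 0^2+Y 1^2);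
       2*Y 0*Y 1/(Y 0^2+Y 1^2), (Y 1^2 - Y 0^2)/(Y 0^2+Y 1^2)] with hM
  rw [Matrix.eta_fin_two M.transpose]
  simp only [Matrix.transpose_apply, hM]
  rw [Matrix.mul_fin_two, Matrix.one_fin_two]
  ext i j; fin_cases i <;> fin_cases j <;> simp <;> field_simp <;> ring

lemma core {F : Type} [Field F] (hsq : ¬ IsSquare (-1:F))
    (Y Z Y' Z' : Fin 2 → F)
    (hY : Y 0^2 + Y 1^2 = Y' 0^2 + Y' 1^2)
    (hZ : Z 0^2 + Z 1^2 = Z' 0^2 + Z' 1^2)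
    (hYZ : Y 0*Z 0 + Y 1*Z 1 = Y' 0*Z' 0 + Y' 1*Z' 1) :
    ∃ θ : Matrix (Fin 2) (Fin 2) F, θ.transpose * θ = 1 ∧ θ.mulVec Y' = Y ∧ θ.mulVec Z' = Z := by
  by_cases hY0 : Y 0 = 0 ∧ Y 1 = 0
  · have hY'0 : Y' 0 = 0 ∧ Y' 1 = 0 := by
      apply aniso hsq; rw [← hY, hY0.1, hY0.2]; ring
    by_cases hZ0 : Z 0 = 0 ∧ Z 1 = 0
    · have hZ'0 : Z' 0 = 0 ∧ Z' 1 = 0 := by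
        apply aniso hsq; rw [← hZ, hZ0.1, hZ0.2]; ring
      refine ⟨1, by simp, ?_, ?_⟩ <;> funext i <;> fin_cases i <;>
        rw [mv] <;> simp [hY'0.1, hY'0.2, hZ'0.1, hZ'0.2, hY0.1, hY0.2, hZ0.1, hZ0.2,
          Matrix.one_apply]
    · have hZ'ne : ¬(Z' 0 = 0 ∧ Z' 1 = 0) := by
        intro h
        exact hZ0 (aniso hsq (by rw [hZ, h.1, h.2]; ring))
      obtain ⟨θ, hθo, hθZ⟩ := rot_exists hsq hZ'ne hZ
      refine ⟨θ, hθo, ?_, hθZ⟩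
      funext i; fin_cases i <;> rw [mv] <;>
        simp [hY'0.1, hY'0.2, hY0.1, hY0.2]
  · -- main case
    have hr : Y 0^2 + Y 1^2 ≠ 0 := fun h => hY0 (aniso hsq h)
    have hY'ne : ¬(Y' 0 = 0 ∧ Y' 1 = 0) := by
      intro h; exact hr (by rw [hY, h.1, h.2]; ring)
    obtain ⟨ρ, hρo, hρY⟩ := rot_exists hsq hY'ne hY
    set Z'' := ρ.mulVec Z' with hZ''
    have ipYZ : Y 0 * Z'' 0 + Y 1 * Z'' 1 = Y 0 * Z 0 + Y 1 * Z 1 := by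
      have h1 := orth_ip hρo Y' Z'
      rw [hρY] at h1
      rw [hZ'', h1, hYZ]
    have nZ : Z'' 0 * Z'' 0 + Z'' 1 * Z'' 1 = Z 0 * Z 0 + Z 1 * Z 1 := by
      have h1 := orth_ip hρo Z' Z'
      rw [hZ'', h1]; linear_combination -hZ
    have hβ : (Y 0 * Z'' 1 - Y 1 * Z'' 0 - (Y 0 * Z 1 - Y 1 * Z 0)) *
              (Y 0 * Z'' 1 - Y 1 * Z'' 0 + (Y 0 * Z 1 - Y 1 * Z 0)) = 0 := by
      linear_combination (Y 0^2 + Y 1^2) * nZ -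
        (Y 0*Z'' 0 + Y 1*Z'' 1 + Y 0*Z 0 + Y 1*Z 1) * ipYZ
    rcases mul_eq_zero.mp hβ with hc | hc
    · refine ⟨ρ, hρo, hρY, ?_⟩
      have c0 : (Y 0^2 + Y 1^2) * Z'' 0 = (Y 0^2 + Y 1^2) * Z 0 := by
        linear_combination Y 0 * ipYZ - Y 1 * hc
      have c1 : (Y 0^2 + Y 1^2) * Z'' 1 = (Y 0^2 + Y 1^2) * Z 1 := by
        linear_combination Y 1 * ipYZ + Y 0 * hc
      have e0 := mul_left_cancel₀ hr c0
      have e1 := mul_left_cancel₀ hr c1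
      rw [← hZ'']; funext i; fin_cases i <;> assumption
    · -- reflection case
      set σ := !![(Y 0^2 - Y 1^2)/(Y 0^2+Y 1^2), 2*Y 0*Y 1/(Y 0^2+Y 1^2);
         2*Y 0*Y 1/(Y 0^2+Y 1^2), (Y 1^2 - Y 0^2)/(Y 0^2+Y 1^2)] with hσ
      have hσo : σ.transpose * σ = 1 := refl_orth hr
      refine ⟨σ * ρ, ?_, ?_, ?_⟩
      · rw [Matrix.transpose_mul, Matrix.mul_assoc, ← Matrix.mul_assoc σ.transpose, hσo,
          Matrix.one_mul, hρo]
      · rw [← Matrix.mulVec_mulVec, hρY]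
        funext i; fin_cases i <;> rw [mv] <;> simp [hσ] <;> field_simp <;> ring
      · have d0 : (Y 0^2 + Y 1^2) * Z'' 0 = (Y 0^2 - Y 1^2)*Z 0 + 2*Y 0*Y 1*Z 1 := by
          linear_combination Y 0 * ipYZ - Y 1 * hc
        have d1 : (Y 0^2 + Y 1^2) * Z'' 1 = 2*Y 0*Y 1*Z 0 + (Y 1^2 - Y 0^2)*Z 1 := by
          linear_combination Y 1 * ipYZ + Y 0 * hc
        have e0 : Z'' 0 = ((Y 0^2 - Y 1^2)*Z 0 + 2*Y 0*Y 1*Z 1)/(Y 0^2 + Y 1^2) := by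
          field_simp; linear_combination d0
        have e1 : Z'' 1 = (2*Y 0*Y 1*Z 0 + (Y 1^2 - Y 0^2)*Z 1)/(Y 0^2 + Y 1^2) := by
          field_simp; linear_combination d1
        rw [← Matrix.mulVec_mulVec, ← hZ'']
        funext i; fin_cases i <;> rw [mv] <;> rw [e0, e1] <;> simp [hσ] <;> field_simp <;> ring

lemma exists_rigid {F : Type} [Field F] (hsq : ¬ IsSquare (-1:F))
    (x y z x' y' z' : Fin 2 → F)
    (h1 : (x 0 - y 0)^2 + (x 1 - y 1)^2 = (x' 0 - y' 0)^2 + (x' 1 - y' 1)^2)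
    (h2 : (x 0 - z 0)^2 + (x 1 - z 1)^2 = (x' 0 - z' 0)^2 + (x' 1 - z' 1)^2)
    (h3 : (y 0 - z 0)^2 + (y 1 - z 1)^2 = (y' 0 - z' 0)^2 + (y' 1 - z' 1)^2) :
    ∃ θ : Matrix (Fin 2) (Fin 2) F, θ.transpose * θ = 1 ∧
      x - θ.mulVec x' = y - θ.mulVec y' ∧ x - θ.mulVec x' = z - θ.mulVec z' := by
  have two_ne : (2:F) ≠ 0 := by
    intro h2'
    exact hsq ⟨1, by linear_combination -h2'⟩
  have hip : 2 * ((y 0 - x 0)*(z 0 - x 0) + (y 1 - x 1)*(z 1 - x 1)) =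
      2 * ((y' 0 - x' 0)*(z' 0 - x' 0) + (y' 1 - x' 1)*(z' 1 - x' 1)) := by
    linear_combination h1 + h2 - h3
  obtain ⟨θ, hθo, hθY, hθZ⟩ := core hsq (y - x) (z - x) (y' - x') (z' - x')
    (by simp only [Pi.sub_apply]; linear_combination h1)
    (by simp only [Pi.sub_apply]; linear_combination h2)
    (by simp only [Pi.sub_apply]; linear_combination mul_left_cancel₀ two_ne hip)
  rw [Matrix.mulVec_sub] at hθY hθZ
  refine ⟨θ, hθo, ?_, ?_⟩ <;> funext i
  · have h := congrFun hθY i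
    simp only [Pi.sub_apply] at h ⊢
    linear_combination h
  · have h := congrFun hθZ i
    simp only [Pi.sub_apply] at h ⊢
    linear_combination h
def dv {F : Type} [Field F] (a : (Fin 2 → F) × ((Fin 2 → F) × (Fin 2 → F))) : Fin 3 → F :=
  ![ (a.1 0 - a.2.1 0)^2 + (a.1 1 - a.2.1 1)^2,
     (a.1 0 - a.2.2 0)^2 + (a.1 1 - a.2.2 1)^2,
     (a.2.1 0 - a.2.2 0)^2 + (a.2.1 1 - a.2.2 1)^2 ]

lemma nuT_eq {F : Type} [Field F] [Fintype F] [DecidableEq F]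
    (E : Finset (Fin 2 → F)) (t : Fin 3 → F) :
    nuT E t = ((E ×ˢ E ×ˢ E).filter (fun a => dv a = t)).card := by
  unfold nuT
  congr 1
  apply Finset.filter_congr
  intro a _
  simp only [Fin.sum_univ_two]
  constructor
  · rintro ⟨g0, g1, g2⟩
    funext i
    fin_cases i <;> simpa [dv]
  · intro h
    refine ⟨?_, ?_, ?_⟩
    · simpa [dv] using congrFun h 0
    · simpa [dv] using congrFun h 1
    · simpa [dv] using congrFun h 2

lemma step1 {F : Type} [Field F] [Fintype F] [DecidableEq F] (E : Finset (Fin 2 → F)) :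
    ∑ t : Fin 3 → F, (nuT E t)^2 =
    (((E ×ˢ E ×ˢ E) ×ˢ (E ×ˢ E ×ˢ E)).filter (fun ab => dv ab.1 = dv ab.2)).card := by
  rw [Finset.card_eq_sum_card_fiberwise
    (f := fun ab => dv ab.1) (t := Finset.univ) (fun _ _ => Finset.mem_univ _)]
  apply Finset.sum_congr rfl
  intro t _
  rw [nuT_eq, sq, ← Finset.card_product, ← Finset.filter_product, Finset.filter_filter]
  congr 1
  ext ab
  simp only [Finset.mem_filter]
  constructor
  · rintro ⟨hm, ha, hb⟩
    exact ⟨hm, ha.trans hb.symm, ha⟩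
  · rintro ⟨hm, h, ha⟩
    exact ⟨hm, ha, h.symm.trans ha⟩

lemma step2 {F : Type} [Field F] [Fintype F] [DecidableEq F]
    (E : Finset (Fin 2 → F)) (θ : Matrix (Fin 2) (Fin 2) F) :
    ∑ w : Fin 2 → F, (lamCount E θ w)^3 =
    (((E ×ˢ E) ×ˢ (E ×ˢ E) ×ˢ (E ×ˢ E)).filter (fun a =>
      a.1.1 - θ.mulVec a.1.2 = a.2.1.1 - θ.mulVec a.2.1.2 ∧
      a.1.1 - θ.mulVec a.1.2 = a.2.2.1 - θ.mulVec a.2.2.2)).card := by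
  rw [Finset.card_eq_sum_card_fiberwise
    (f := fun a => a.1.1 - θ.mulVec a.1.2) (t := Finset.univ) (fun _ _ => Finset.mem_univ _)]
  apply Finset.sum_congr rfl
  intro w _
  have h3 : (lamCount E θ w)^3 =
      (((E ×ˢ E).filter (fun uv => uv.1 - θ.mulVec uv.2 = w)) ×ˢ
       (((E ×ˢ E).filter (fun uv => uv.1 - θ.mulVec uv.2 = w)) ×ˢ
        ((E ×ˢ E).filter (fun uv => uv.1 - θ.mulVec uv.2 = w)))).card := by
    rw [Finset.card_product, Finset.card_product]
    unfold lamCount; ring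
  rw [h3, ← Finset.filter_product, ← Finset.filter_product, Finset.filter_filter]
  congr 1
  ext a
  simp only [Finset.mem_filter]
  constructor
  · rintro ⟨hm, h1, h2, hh⟩
    exact ⟨hm, ⟨h1.trans h2.symm, h1.trans hh.symm⟩, h1⟩
  · rintro ⟨hm, ⟨e1, e2⟩, h1⟩
    exact ⟨hm, h1, e1.symm.trans h1, e2.symm.trans h1⟩
lemma step3 {F : Type} [Field F] [Fintype F] [DecidableEq F]
    (hsq : ¬ IsSquare (-1:F)) (E : Finset (Fin 2 → F)) :
    (((E ×ˢ E ×ˢ E) ×ˢ (E ×ˢ E ×ˢ E)).filter (fun ab => dv ab.1 = dv ab.2)).card ≤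
    ∑ θ ∈ (Finset.univ.filter
        (fun θ : Matrix (Fin 2) (Fin 2) F => θ.transpose * θ = 1)),
      (((E ×ˢ E) ×ˢ (E ×ˢ E) ×ˢ (E ×ˢ E)).filter (fun a =>
        a.1.1 - θ.mulVec a.1.2 = a.2.1.1 - θ.mulVec a.2.1.2 ∧
        a.1.1 - θ.mulVec a.1.2 = a.2.2.1 - θ.mulVec a.2.2.2)).card := by
  classical
  set A := (((E ×ˢ E ×ˢ E) ×ˢ (E ×ˢ E ×ˢ E)).filter (fun ab => dv ab.1 = dv ab.2)) with hA
  set Θ := (Finset.univ.filter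
        (fun θ : Matrix (Fin 2) (Fin 2) F => θ.transpose * θ = 1)) with hΘ
  have hsub : A ⊆ Θ.biUnion (fun θ => A.filter (fun ab =>
      ab.1.1 - θ.mulVec ab.2.1 = ab.1.2.1 - θ.mulVec ab.2.2.1 ∧
      ab.1.1 - θ.mulVec ab.2.1 = ab.1.2.2 - θ.mulVec ab.2.2.2)) := by
    intro ab hab
    have hdv := (Finset.mem_filter.mp hab).2
    have h0 := congrFun hdv 0
    have h1 := congrFun hdv 1
    have h2 := congrFun hdv 2
    simp only [dv, Matrix.cons_val_zero, Matrix.cons_val_one, Matrix.head_cons,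
      Matrix.cons_val_two, Matrix.tail_cons] at h0 h1 h2
    obtain ⟨θ, hθo, c1, c2⟩ :=
      exists_rigid hsq ab.1.1 ab.1.2.1 ab.1.2.2 ab.2.1 ab.2.2.1 ab.2.2.2 h0 h1 h2
    exact Finset.mem_biUnion.mpr ⟨θ, Finset.mem_filter.mpr ⟨Finset.mem_univ _, hθo⟩,
      Finset.mem_filter.mpr ⟨hab, c1, c2⟩⟩
  calc A.card ≤ _ := Finset.card_le_card hsub
    _ ≤ ∑ θ ∈ Θ, (A.filter (fun ab =>
      ab.1.1 - θ.mulVec ab.2.1 = ab.1.2.1 - θ.mulVec ab.2.2.1 ∧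
      ab.1.1 - θ.mulVec ab.2.1 = ab.1.2.2 - θ.mulVec ab.2.2.2)).card := Finset.card_biUnion_le
    _ ≤ _ := by
        apply Finset.sum_le_sum
        intro θ _
        apply Finset.card_le_card_of_injOn
          (fun ab => ((ab.1.1, ab.2.1), ((ab.1.2.1, ab.2.2.1), (ab.1.2.2, ab.2.2.2))))
        · intro ab hab
          simp only [hA, Finset.mem_coe, Finset.mem_filter, Finset.mem_product] at hab
          simp only [Finset.mem_coe, Finset.mem_filter, Finset.mem_product]
          obtain ⟨⟨⟨⟨m1, m2, m3⟩, m4, m5, m6⟩, _⟩, c1, c2⟩ := hab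
          exact ⟨⟨⟨m1, m4⟩, ⟨m2, m5⟩, ⟨m3, m6⟩⟩, c1, c2⟩
        · rintro ⟨⟨a1, a2, a3⟩, a4, a5, a6⟩ _ ⟨⟨b1, b2, b3⟩, b4, b5, b6⟩ _ h
          simp only [Prod.mk.injEq] at h
          simp only [Prod.mk.injEq]
          tauto

theorem stmt_19 :
    ∃ C : ℝ, 0 < C ∧
      ∀ (p n : ℕ), p.Prime → p % 4 = 3 → Odd n →
      ∀ (F : Type) [Field F] [Fintype F] [DecidableEq F], Fintype.card F = p ^ n →
      ∀ (E : Finset (Fin 2 → F)),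
        ∑ t : Fin 3 → F, (nuT E t : ℝ) ^ 2
          ≤ C * ∑ θ ∈ (Finset.univ.filter
              (fun θ : Matrix (Fin 2) (Fin 2) F => θ.transpose * θ = 1)),
              ∑ w : Fin 2 → F, (lamCount E θ w : ℝ) ^ 3 := by
  refine ⟨1, one_pos, ?_⟩
  intro p n hp hp4 hodd F _ _ _ hcard E
  have hsq : ¬ IsSquare (-1:F) := by
    rw [FiniteField.isSquare_neg_one_iff, hcard]
    simp only [ne_eq, not_not]
    obtain ⟨k, hk⟩ := hodd
    subst hk
    rw [Nat.pow_mod, hp4, pow_succ, pow_mul, Nat.mul_mod, Nat.pow_mod]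
    norm_num
  have key : (∑ t : Fin 3 → F, (nuT E t)^2) ≤
      ∑ θ ∈ (Finset.univ.filter
          (fun θ : Matrix (Fin 2) (Fin 2) F => θ.transpose * θ = 1)),
        ∑ w : Fin 2 → F, (lamCount E θ w)^3 := by
    rw [step1]
    refine le_trans (step3 hsq E) ?_
    exact le_of_eq (Finset.sum_congr rfl (fun θ _ => (step2 E θ).symm))
  have keyR := (Nat.cast_le (α := ℝ)).mpr key
  push_cast at keyR
  rw [one_mul]
  exact keyR
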